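/- For h : ℕ → ℝ and X ~ Poisson(x) with x > 0 and j ≥ 1, the following are equivalent: (i) E[|Δʲh(X)|] < ∞; (ii) E[|h(X + j)|] < ∞; (iii) E[Xʲ |h(X)|] < ∞. -/

import Mathlib

open scoped BigOperators

/-- Probability mass function of the Poisson distribution with parameter `x`. -/
noncomputable def poiPMF (x : ℝ) (k : ℕ) : ℝ := Real.exp (-x) * x ^ k / (Nat.factorial k)

/-- Forward difference operator `Δh(k) = h(k+1) - h(k)`. -/
noncomputable def fdiff (h : ℕ → ℝ) : ℕ → ℝ := fun k => h (k + 1) - h k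

lemma poiPMF_nonneg {x : ℝ} (hx : 0 ≤ x) (k : ℕ) : 0 ≤ poiPMF x k := by
  unfold poiPMF; positivity

/-- Summability of `k^a x^k / k!`. -/
lemma summable_pow_mul (x : ℝ) (a : ℕ) :
    Summable fun k : ℕ => (k : ℝ) ^ a * x ^ k / (Nat.factorial k) := by
  induction a using Nat.strong_induction_on with
  | _ a IH =>
    match a with
    | 0 => simpa using Real.summable_pow_div_factorial x
    | (a + 1) =>
      rw [← summable_nat_add_iff 1]
      have heq : (fun n : ℕ => ((n + 1 : ℕ) : ℝ) ^ (a + 1) * x ^ (n + 1) / (Nat.factorial (n + 1)))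
          = fun n : ℕ => ∑ i ∈ Finset.range (a + 1),
              (x * (Nat.choose a i : ℝ)) * ((n : ℝ) ^ i * x ^ n / (Nat.factorial n)) := by
        funext n
        have hfac : ((Nat.factorial (n + 1) : ℕ) : ℝ) = ((n : ℝ) + 1) * (Nat.factorial n : ℝ) := by
          rw [Nat.factorial_succ]; push_cast; ring
        have hpow : ((n : ℝ) + 1) ^ a = ∑ i ∈ Finset.range (a + 1),
            (n : ℝ) ^ i * (Nat.choose a i : ℝ) := by
          simpa using add_pow (n : ℝ) 1 a
        have hne : ((n : ℝ) + 1) ≠ 0 := by positivity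
        have hfne : (Nat.factorial n : ℝ) ≠ 0 := by
          exact_mod_cast (Nat.factorial_pos n).ne'
        push_cast
        rw [hfac]
        rw [show ((n : ℝ) + 1) ^ (a + 1) = ((n : ℝ) + 1) ^ a * ((n : ℝ) + 1) from pow_succ _ _]
        rw [hpow, Finset.sum_mul, Finset.sum_mul, Finset.sum_div]
        refine Finset.sum_congr rfl fun i _ => ?_
        field_simp
        ring
      rw [heq]
      exact summable_sum fun i hi =>
        ((IH i (Finset.mem_range.mp hi)).mul_left _)

/-- Summability of `(k+1)^a x^k / k!`. -/
lemma summable_pow_succ_mul (x : ℝ) (a : ℕ) :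
    Summable fun k : ℕ => ((k : ℝ) + 1) ^ a * x ^ k / (Nat.factorial k) := by
  have heq : (fun k : ℕ => ((k : ℝ) + 1) ^ a * x ^ k / (Nat.factorial k))
      = fun k : ℕ => ∑ i ∈ Finset.range (a + 1),
          ((Nat.choose a i : ℝ)) * ((k : ℝ) ^ i * x ^ k / (Nat.factorial k)) := by
    funext k
    have hpow : ((k : ℝ) + 1) ^ a = ∑ i ∈ Finset.range (a + 1),
        (k : ℝ) ^ i * (Nat.choose a i : ℝ) := by
      simpa using add_pow (k : ℝ) 1 a
    rw [hpow, Finset.sum_mul, Finset.sum_div]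
    refine Finset.sum_congr rfl fun i _ => ?_
    ring
  rw [heq]
  exact summable_sum fun i _ => ((summable_pow_mul x i).mul_left _)

lemma summable_pow_pmf {x : ℝ} (a : ℕ) :
    Summable fun k : ℕ => (k : ℝ) ^ a * poiPMF x k := by
  have := (summable_pow_mul x a).mul_left (Real.exp (-x))
  refine this.congr fun k => ?_
  unfold poiPMF; ring

lemma fact_mul_fact_le (m t : ℕ) : m.factorial * t.factorial ≤ (m + t).factorial :=
  Nat.le_of_dvd (Nat.factorial_pos _) (Nat.factorial_mul_factorial_dvd_factorial_add m t)

lemma fact_add_le (k j : ℕ) : (k + j).factorial ≤ (k + j) ^ j * k.factorial := by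
  induction j with
  | zero => simp
  | succ j ih =>
    have h1 : (k + (j + 1)).factorial = (k + j + 1) * (k + j).factorial := by
      rw [show k + (j + 1) = (k + j) + 1 from rfl, Nat.factorial_succ]
    rw [h1]
    calc (k + j + 1) * (k + j).factorial
        ≤ (k + j + 1) * ((k + j) ^ j * k.factorial) := Nat.mul_le_mul_left _ ih
      _ ≤ (k + (j + 1)) * ((k + (j + 1)) ^ j * k.factorial) := by
          have : k + j ≤ k + (j + 1) := by omega
          have h2 : (k + j) ^ j ≤ (k + (j + 1)) ^ j := Nat.pow_le_pow_left this j
          have h3 : k + j + 1 = k + (j + 1) := by omega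
          rw [h3]
          exact Nat.mul_le_mul_left _ (Nat.mul_le_mul_right _ h2)
      _ = (k + (j + 1)) ^ (j + 1) * k.factorial := by ring

lemma le_fact_add (k j : ℕ) : (k + 1) ^ j * k.factorial ≤ (k + j).factorial := by
  induction j with
  | zero => simp
  | succ j ih =>
    have h1 : (k + (j + 1)).factorial = (k + j + 1) * (k + j).factorial := by
      rw [show k + (j + 1) = (k + j) + 1 from rfl, Nat.factorial_succ]
    rw [h1]
    calc (k + 1) ^ (j + 1) * k.factorial
        = (k + 1) * ((k + 1) ^ j * k.factorial) := by ring
      _ ≤ (k + 1) * (k + j).factorial := Nat.mul_le_mul_left _ ih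
      _ ≤ (k + j + 1) * (k + j).factorial := Nat.mul_le_mul_right _ (by omega)

lemma key_nat1 (k j : ℕ) (hj : 1 ≤ j) :
    (k + j) ^ j * k.factorial ≤ j ^ j * (k + j).factorial := by
  have h2 : k + j ≤ j * (k + 1) := by nlinarith
  calc (k + j) ^ j * k.factorial
      ≤ (j * (k + 1)) ^ j * k.factorial :=
        Nat.mul_le_mul_right _ (Nat.pow_le_pow_left h2 j)
    _ = j ^ j * ((k + 1) ^ j * k.factorial) := by rw [mul_pow]; ring
    _ ≤ j ^ j * (k + j).factorial := Nat.mul_le_mul_left _ (le_fact_add k j)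

lemma key_nat2 (a m t : ℕ) :
    (t + m + 1) ^ (a + 1) * (m.factorial * t.factorial)
      ≤ (m + 1) ^ a * (t + 1) ^ a * ((t + m + 1) * (m + t).factorial) := by
  have h2 : t + m + 1 ≤ (m + 1) * (t + 1) := by nlinarith
  have h3 : (t + m + 1) ^ a ≤ (m + 1) ^ a * (t + 1) ^ a := by
    calc (t + m + 1) ^ a ≤ ((m + 1) * (t + 1)) ^ a := Nat.pow_le_pow_left h2 a
      _ = (m + 1) ^ a * (t + 1) ^ a := mul_pow _ _ _
  calc (t + m + 1) ^ (a + 1) * (m.factorial * t.factorial)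
      = (t + m + 1) ^ a * (m.factorial * t.factorial) * (t + m + 1) := by ring
    _ ≤ ((m + 1) ^ a * (t + 1) ^ a) * (m + t).factorial * (t + m + 1) := by
        exact Nat.mul_le_mul_right _ (Nat.mul_le_mul h3 (fact_mul_fact_le m t))
    _ = (m + 1) ^ a * (t + 1) ^ a * ((t + m + 1) * (m + t).factorial) := by ring

/-- Binomial recurrence for sums. -/
lemma choose_sum_rec (j : ℕ) (f : ℕ → ℝ) :
    ∑ i ∈ Finset.range (j + 2), (Nat.choose (j + 1) i : ℝ) * f i
      = ∑ i ∈ Finset.range (j + 1), (Nat.choose j i : ℝ) * f (i + 1)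
        + ∑ i ∈ Finset.range (j + 1), (Nat.choose j i : ℝ) * f i := by
  have h1 := Finset.sum_range_succ' (fun i => (Nat.choose (j + 1) i : ℝ) * f i) (j + 1)
  have h2 := Finset.sum_range_succ' (fun i => (Nat.choose j i : ℝ) * f i) (j + 1)
  have h3 : ∑ i ∈ Finset.range (j + 2), (Nat.choose j i : ℝ) * f i
      = ∑ i ∈ Finset.range (j + 1), (Nat.choose j i : ℝ) * f i := by
    rw [Finset.sum_range_succ]
    simp [Nat.choose_succ_self]
  have h4 : ∀ i, ((Nat.choose (j + 1) (i + 1) : ℕ) : ℝ)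
      = (Nat.choose j i : ℝ) + (Nat.choose j (i + 1) : ℝ) := by
    intro i
    rw [Nat.choose_succ_succ]; push_cast; ring
  simp only [h4] at h1
  have h5 : ∑ i ∈ Finset.range (j + 1),
      ((Nat.choose j i : ℝ) + (Nat.choose j (i + 1) : ℝ)) * f (i + 1)
      = ∑ i ∈ Finset.range (j + 1), (Nat.choose j i : ℝ) * f (i + 1)
        + ∑ i ∈ Finset.range (j + 1), (Nat.choose j (i + 1) : ℝ) * f (i + 1) := by
    rw [← Finset.sum_add_distrib]
    exact Finset.sum_congr rfl fun i _ => by ring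
  simp only [h5] at h1
  rw [h1]
  have h6 : ∑ i ∈ Finset.range (j + 1), (Nat.choose j (i + 1) : ℝ) * f (i + 1)
      = ∑ i ∈ Finset.range (j + 1), (Nat.choose j i : ℝ) * f i
        - (Nat.choose j 0 : ℝ) * f 0 := by
    have := h2
    rw [h3] at this
    linarith [this]
  rw [h6]
  simp [Nat.choose_zero_right]
  ring

/-- Bound on the iterated forward difference. -/
lemma fdiff_iter_abs_le (j : ℕ) (h : ℕ → ℝ) (k : ℕ) :
    |(fdiff^[j] h) k| ≤ ∑ i ∈ Finset.range (j + 1), (Nat.choose j i : ℝ) * |h (k + i)| := by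
  induction j generalizing h with
  | zero => simp
  | succ j ih =>
    rw [Function.iterate_succ_apply]
    calc |(fdiff^[j] (fdiff h)) k|
        ≤ ∑ i ∈ Finset.range (j + 1), (Nat.choose j i : ℝ) * |fdiff h (k + i)| := ih (fdiff h)
      _ ≤ ∑ i ∈ Finset.range (j + 1), (Nat.choose j i : ℝ) * (|h (k + (i + 1))| + |h (k + i)|) := by
          refine Finset.sum_le_sum fun i _ => ?_
          have : |fdiff h (k + i)| ≤ |h (k + (i + 1))| + |h (k + i)| := by
            unfold fdiff
            rw [show k + (i + 1) = k + i + 1 from by omega]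
            exact abs_sub _ _
          exact mul_le_mul_of_nonneg_left this (by positivity)
      _ = ∑ i ∈ Finset.range (j + 1), (Nat.choose j i : ℝ) * |h (k + (i + 1))|
          + ∑ i ∈ Finset.range (j + 1), (Nat.choose j i : ℝ) * |h (k + i)| := by
          rw [← Finset.sum_add_distrib]
          exact Finset.sum_congr rfl fun i _ => by ring
      _ = ∑ i ∈ Finset.range (j + 2), (Nat.choose (j + 1) i : ℝ) * |h (k + i)| :=
          (choose_sum_rec j (fun i => |h (k + i)|)).symm

/-- Telescoping bound. -/
lemma abs_le_telescope (g : ℕ → ℝ) (k : ℕ) :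
    |g k| ≤ |g 0| + ∑ m ∈ Finset.range k, |fdiff g m| := by
  induction k with
  | zero => simp
  | succ k ih =>
    have : g (k + 1) = g k + fdiff g k := by unfold fdiff; ring
    rw [this, Finset.sum_range_succ]
    calc |g k + fdiff g k| ≤ |g k| + |fdiff g k| := abs_add_le _ _
      _ ≤ |g 0| + ∑ m ∈ Finset.range k, |fdiff g m| + |fdiff g k| := by linarith
      _ = _ := by ring

/-- Shift monotonicity: summability at shift `j` implies summability at shift `i ≤ j`. -/
lemma shift_summable {x : ℝ} (hx : 0 < x) (h : ℕ → ℝ) {i j : ℕ} (hij : i ≤ j)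
    (H : Summable fun k => |h (k + j)| * poiPMF x k) :
    Summable fun k => |h (k + i)| * poiPMF x k := by
  set d := j - i with hd
  rw [← summable_nat_add_iff d]
  refine Summable.of_nonneg_of_le
    (fun k => mul_nonneg (abs_nonneg _) (poiPMF_nonneg hx.le _))
    (fun k => ?_) (H.mul_left (x ^ d))
  have hkey : k + d + i = k + j := by omega
  rw [hkey]
  have hfpos : ∀ n : ℕ, (0:ℝ) < (Nat.factorial n : ℝ) := fun n => by positivity
  have hp : poiPMF x (k + d) ≤ x ^ d * poiPMF x k := by
    unfold poiPMF
    rw [mul_div_assoc', div_le_div_iff₀ (hfpos _) (hfpos _)]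
    have hfle : (Nat.factorial k : ℝ) ≤ (Nat.factorial (k + d) : ℝ) := by
      exact_mod_cast Nat.factorial_le (by omega)
    calc Real.exp (-x) * x ^ (k + d) * (Nat.factorial k : ℝ)
        ≤ Real.exp (-x) * x ^ (k + d) * (Nat.factorial (k + d) : ℝ) :=
          mul_le_mul_of_nonneg_left hfle (by positivity)
      _ = x ^ d * (Real.exp (-x) * x ^ k) * (Nat.factorial (k + d) : ℝ) := by
          rw [pow_add]; ring
  calc |h (k + j)| * poiPMF x (k + d) ≤ |h (k + j)| * (x ^ d * poiPMF x k) :=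
        mul_le_mul_of_nonneg_left hp (abs_nonneg _)
    _ = x ^ d * (|h (k + j)| * poiPMF x k) := by ring

set_option maxHeartbeats 1000000 in
/-- Equivalence (ii) ↔ (iii). -/
lemma iff23 {x : ℝ} (hx : 0 < x) (h : ℕ → ℝ) (j : ℕ) (hj : 1 ≤ j) :
    (Summable fun k => |h (k + j)| * poiPMF x k) ↔
      Summable fun k : ℕ => (k : ℝ) ^ j * |h k| * poiPMF x k := by
  have hfpos : ∀ n : ℕ, (0:ℝ) < (Nat.factorial n : ℝ) := fun n => by positivity
  have hpmf : ∀ n, 0 ≤ poiPMF x n := poiPMF_nonneg hx.le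
  constructor
  · intro H
    rw [← summable_nat_add_iff j]
    refine Summable.of_nonneg_of_le
      (fun k => mul_nonneg (mul_nonneg (by positivity) (abs_nonneg _)) (hpmf _))
      (fun k => ?_) (H.mul_left ((j:ℝ) ^ j * x ^ j))
    have hk : (((k + j : ℕ) : ℝ)) ^ j * poiPMF x (k + j)
        ≤ (j : ℝ) ^ j * x ^ j * poiPMF x k := by
      unfold poiPMF
      rw [mul_div_assoc', mul_div_assoc', div_le_div_iff₀ (hfpos _) (hfpos _)]
      have hcast : (((k + j : ℕ) : ℝ)) ^ j * (Nat.factorial k : ℝ)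
          ≤ (j : ℝ) ^ j * (Nat.factorial (k + j) : ℝ) := by
        exact_mod_cast key_nat1 k j hj
      calc ((k + j : ℕ) : ℝ) ^ j * (Real.exp (-x) * x ^ (k + j)) * (Nat.factorial k : ℝ)
          = (((k + j : ℕ) : ℝ)) ^ j * (Nat.factorial k : ℝ) * (Real.exp (-x) * x ^ (k + j)) := by
            ring
        _ ≤ (j : ℝ) ^ j * (Nat.factorial (k + j) : ℝ) * (Real.exp (-x) * x ^ (k + j)) := by
            refine mul_le_mul_of_nonneg_right hcast (by positivity)
        _ = (j : ℝ) ^ j * x ^ j * (Real.exp (-x) * x ^ k) * (Nat.factorial (k + j) : ℝ) := by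
            rw [pow_add]; ring
    calc ((k + j : ℕ) : ℝ) ^ j * |h (k + j)| * poiPMF x (k + j)
        = |h (k + j)| * (((k + j : ℕ) : ℝ) ^ j * poiPMF x (k + j)) := by ring
      _ ≤ |h (k + j)| * ((j : ℝ) ^ j * x ^ j * poiPMF x k) :=
          mul_le_mul_of_nonneg_left hk (abs_nonneg _)
      _ = (j : ℝ) ^ j * x ^ j * (|h (k + j)| * poiPMF x k) := by ring
  · intro H
    have H' : Summable fun k : ℕ => ((k + j : ℕ) : ℝ) ^ j * |h (k + j)| * poiPMF x (k + j) :=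
      (summable_nat_add_iff j).mpr H
    refine Summable.of_nonneg_of_le (fun k => mul_nonneg (abs_nonneg _) (hpmf _))
      (fun k => ?_) (H'.mul_left ((x ^ j)⁻¹))
    have h0 : x ^ j * poiPMF x k ≤ ((k + j : ℕ) : ℝ) ^ j * poiPMF x (k + j) := by
      unfold poiPMF
      rw [mul_div_assoc', mul_div_assoc', div_le_div_iff₀ (hfpos _) (hfpos _)]
      have hcast : ((Nat.factorial (k + j) : ℕ) : ℝ)
          ≤ (((k + j : ℕ) : ℝ)) ^ j * (Nat.factorial k : ℝ) := by
        exact_mod_cast fact_add_le k j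
      calc x ^ j * (Real.exp (-x) * x ^ k) * (Nat.factorial (k + j) : ℝ)
          = (Real.exp (-x) * x ^ (k + j)) * (Nat.factorial (k + j) : ℝ) := by
            rw [pow_add]; ring
        _ ≤ (Real.exp (-x) * x ^ (k + j)) * (((k + j : ℕ) : ℝ) ^ j * (Nat.factorial k : ℝ)) :=
            mul_le_mul_of_nonneg_left hcast (by positivity)
        _ = ((k + j : ℕ) : ℝ) ^ j * (Real.exp (-x) * x ^ (k + j)) * (Nat.factorial k : ℝ) := by
            ring
    have hxj : (0:ℝ) < x ^ j := by positivity
    have hk : poiPMF x k ≤ (x ^ j)⁻¹ * (((k + j : ℕ) : ℝ) ^ j * poiPMF x (k + j)) := by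
      rw [← inv_mul_cancel_left₀ hxj.ne' (poiPMF x k)]
      exact mul_le_mul_of_nonneg_left h0 (by positivity)
    calc |h (k + j)| * poiPMF x k
        ≤ |h (k + j)| * ((x ^ j)⁻¹ * (((k + j : ℕ) : ℝ) ^ j * poiPMF x (k + j))) :=
          mul_le_mul_of_nonneg_left hk (abs_nonneg _)
      _ = (x ^ j)⁻¹ * (((k + j : ℕ) : ℝ) ^ j * |h (k + j)| * poiPMF x (k + j)) := by ring

lemma succ_weight {x : ℝ} (hx : 0 < x) (q : ℕ → ℝ) (a : ℕ)
    (H : Summable fun k : ℕ => (k : ℝ) ^ a * q k * poiPMF x k)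
    (hq : ∀ k, 0 ≤ q k) :
    Summable fun m : ℕ => ((m : ℝ) + 1) ^ a * q m * poiPMF x m := by
  rw [← summable_nat_add_iff 1]
  refine Summable.of_nonneg_of_le
    (fun m => mul_nonneg (mul_nonneg (by positivity) (hq _)) (poiPMF_nonneg hx.le _))
    (fun m => ?_) (((summable_nat_add_iff 1).mpr H).mul_left ((2:ℝ) ^ a))
  have hle : (((m + 1 : ℕ) : ℝ) + 1) ^ a ≤ 2 ^ a * ((m + 1 : ℕ) : ℝ) ^ a := by
    rw [← mul_pow]
    refine pow_le_pow_left₀ (by positivity) ?_ a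
    push_cast; linarith
  calc (((m + 1 : ℕ) : ℝ) + 1) ^ a * q (m + 1) * poiPMF x (m + 1)
      = (((m + 1 : ℕ) : ℝ) + 1) ^ a * (q (m + 1) * poiPMF x (m + 1)) := by ring
    _ ≤ (2 ^ a * ((m + 1 : ℕ) : ℝ) ^ a) * (q (m + 1) * poiPMF x (m + 1)) :=
        mul_le_mul_of_nonneg_right hle (mul_nonneg (hq _) (poiPMF_nonneg hx.le _))
    _ = 2 ^ a * (((m + 1 : ℕ) : ℝ) ^ a * q (m + 1) * poiPMF x (m + 1)) := by ring

set_option maxHeartbeats 8000000 in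
/-- Key step: weighted summability of `fdiff g` gives a higher weighted summability of `g`. -/
lemma key_step {x : ℝ} (hx : 0 < x) (g : ℕ → ℝ) (a : ℕ)
    (H : Summable fun k : ℕ => (k : ℝ) ^ a * |fdiff g k| * poiPMF x k) :
    Summable fun k : ℕ => (k : ℝ) ^ (a + 1) * |g k| * poiPMF x k := by
  have hfpos : ∀ n : ℕ, (0:ℝ) < (Nat.factorial n : ℝ) := fun n => by positivity
  have hpmf : ∀ n, 0 ≤ poiPMF x n := poiPMF_nonneg hx.le
  have hu : Summable fun t : ℕ => ((t : ℝ) + 1) ^ a * x ^ t / (Nat.factorial t) :=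
    summable_pow_succ_mul x a
  set C := ∑' t : ℕ, ((t : ℝ) + 1) ^ a * x ^ t / (Nat.factorial t) with hCdef
  have hC0 : 0 ≤ C := tsum_nonneg fun t => by positivity
  set W : ℕ → ℕ → ℝ :=
    fun m k => if m < k then (k : ℝ) ^ (a + 1) * poiPMF x k else 0 with hWdef
  have hWnonneg : ∀ m k, 0 ≤ W m k := by
    intro m k
    simp only [hWdef]
    split
    · exact mul_nonneg (by positivity) (hpmf _)
    · exact le_refl 0
  have hWsummable : ∀ m, Summable (W m) := by
    intro m
    refine Summable.of_nonneg_of_le (hWnonneg m) (fun k => ?_) (summable_pow_pmf (x := x) (a + 1))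
    simp only [hWdef]
    split
    · exact le_refl _
    · exact mul_nonneg (by positivity) (hpmf _)
  -- the per-term tail estimate
  have hterm : ∀ m t : ℕ, W m (t + (m + 1))
      ≤ (((m : ℝ) + 1) ^ a * x ^ (m + 1) / (Nat.factorial m) * Real.exp (-x))
        * (((t : ℝ) + 1) ^ a * x ^ t / (Nat.factorial t)) := by
    intro m t
    have hmlt : m < t + (m + 1) := by omega
    simp only [hWdef, if_pos hmlt]
    unfold poiPMF
    have hfactsucc : ((Nat.factorial (t + (m + 1)) : ℕ) : ℝ)
        = ((t + m + 1 : ℕ) : ℝ) * ((Nat.factorial (m + t) : ℕ) : ℝ) := by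
      rw [show t + (m + 1) = (m + t) + 1 from by omega, Nat.factorial_succ]
      push_cast; ring
    have hnat := key_nat2 a m t
    have hcast : ((t + m + 1 : ℕ) : ℝ) ^ (a + 1)
          * ((Nat.factorial m : ℝ) * (Nat.factorial t : ℝ))
        ≤ ((m : ℝ) + 1) ^ a * ((t : ℝ) + 1) ^ a
          * (((t + m + 1 : ℕ) : ℝ) * (Nat.factorial (m + t) : ℝ)) := by
      exact_mod_cast hnat
    have hL : ((t + (m + 1) : ℕ) : ℝ) ^ (a + 1)
          * (Real.exp (-x) * x ^ (t + (m + 1)) / (Nat.factorial (t + (m + 1)) : ℝ))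
        = (((t + m + 1 : ℕ) : ℝ) ^ (a + 1) * (Real.exp (-x) * x ^ (t + m + 1)))
          / (((t + m + 1 : ℕ) : ℝ) * (Nat.factorial (m + t) : ℝ)) := by
      rw [show t + (m + 1) = t + m + 1 from by omega,
        show ((Nat.factorial (t + m + 1) : ℕ) : ℝ)
          = ((t + m + 1 : ℕ) : ℝ) * ((Nat.factorial (m + t) : ℕ) : ℝ) from by
          rw [show t + m + 1 = (m + t) + 1 from by omega, Nat.factorial_succ]; push_cast; ring]
      exact mul_div_assoc' _ _ _
    have hR : (((m : ℝ) + 1) ^ a * x ^ (m + 1) / (Nat.factorial m) * Real.exp (-x))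
          * (((t : ℝ) + 1) ^ a * x ^ t / (Nat.factorial t))
        = (((m : ℝ) + 1) ^ a * ((t : ℝ) + 1) ^ a * (Real.exp (-x) * x ^ (t + m + 1)))
          / ((Nat.factorial m : ℝ) * (Nat.factorial t : ℝ)) := by
      rw [show t + m + 1 = (m + 1) + t from by omega, pow_add]
      field_simp
      ring
    rw [hL, hR, div_le_div_iff₀ (by positivity) (by positivity)]
    calc ((t + m + 1 : ℕ) : ℝ) ^ (a + 1) * (Real.exp (-x) * x ^ (t + m + 1))
          * ((Nat.factorial m : ℝ) * (Nat.factorial t : ℝ))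
        = (((t + m + 1 : ℕ) : ℝ) ^ (a + 1)
            * ((Nat.factorial m : ℝ) * (Nat.factorial t : ℝ)))
          * (Real.exp (-x) * x ^ (t + m + 1)) := by ring
      _ ≤ (((m : ℝ) + 1) ^ a * ((t : ℝ) + 1) ^ a
            * (((t + m + 1 : ℕ) : ℝ) * (Nat.factorial (m + t) : ℝ)))
          * (Real.exp (-x) * x ^ (t + m + 1)) :=
          mul_le_mul_of_nonneg_right hcast (by positivity)
      _ = ((m : ℝ) + 1) ^ a * ((t : ℝ) + 1) ^ a * (Real.exp (-x) * x ^ (t + m + 1))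
          * (((t + m + 1 : ℕ) : ℝ) * (Nat.factorial (m + t) : ℝ)) := by ring
  -- row sums of W
  have hWsum : ∀ m, (∑' k, W m k)
      ≤ ((m : ℝ) + 1) ^ a * x ^ (m + 1) / (Nat.factorial m) * Real.exp (-x) * C := by
    intro m
    have h1 := Summable.sum_add_tsum_nat_add (f := W m) (m + 1) (hWsummable m)
    have h2 : ∑ i ∈ Finset.range (m + 1), W m i = 0 := by
      refine Finset.sum_eq_zero fun i hi => ?_
      simp only [hWdef]
      rw [if_neg]
      have := Finset.mem_range.mp hi
      omega
    have h3 : (∑' k, W m k) = ∑' t, W m (t + (m + 1)) := by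
      rw [← h1, h2, zero_add]
    rw [h3]
    have h4 : (∑' t : ℕ, W m (t + (m + 1)))
        ≤ ∑' t : ℕ, (((m : ℝ) + 1) ^ a * x ^ (m + 1) / (Nat.factorial m) * Real.exp (-x))
            * (((t : ℝ) + 1) ^ a * x ^ t / (Nat.factorial t)) :=
      Summable.tsum_le_tsum (hterm m) ((summable_nat_add_iff (m + 1)).mpr (hWsummable m))
        (hu.mul_left _)
    rw [tsum_mul_left] at h4
    exact h4
  -- the product function
  set F : ℕ × ℕ → ℝ := fun p => |fdiff g p.1| * W p.1 p.2 with hFdef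
  have hFnonneg : ∀ p, 0 ≤ F p := fun p => mul_nonneg (abs_nonneg _) (hWnonneg _ _)
  have hsucc : Summable fun m : ℕ => ((m : ℝ) + 1) ^ a * |fdiff g m| * poiPMF x m :=
    succ_weight hx (fun k => |fdiff g k|) a H (fun k => abs_nonneg _)
  have hrowsum : Summable fun m : ℕ => ∑' k, F (m, k) := by
    refine Summable.of_nonneg_of_le
      (fun m => tsum_nonneg fun k => hFnonneg _)
      (fun m => ?_) (hsucc.mul_left (x * C))
    have h5 : (∑' k, F (m, k)) = |fdiff g m| * ∑' k, W m k := by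
      simp only [hFdef]
      exact tsum_mul_left
    rw [h5]
    calc |fdiff g m| * ∑' k, W m k
        ≤ |fdiff g m|
          * (((m : ℝ) + 1) ^ a * x ^ (m + 1) / (Nat.factorial m) * Real.exp (-x) * C) :=
          mul_le_mul_of_nonneg_left (hWsum m) (abs_nonneg _)
      _ = x * C * (((m : ℝ) + 1) ^ a * |fdiff g m| * poiPMF x m) := by
          unfold poiPMF
          rw [pow_succ]
          field_simp
  have hF : Summable F :=
    (summable_prod_of_nonneg hFnonneg).mpr
      ⟨fun m => Summable.congr ((hWsummable m).mul_left (|fdiff g m|)) (fun k => rfl), hrowsum⟩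
  have hF2 : Summable fun p : ℕ × ℕ => F (p.2, p.1) :=
    ((Equiv.prodComm ℕ ℕ).summable_iff (f := F)).mpr hF
  have hcol : Summable fun k : ℕ => ∑' m, F (m, k) :=
    ((summable_prod_of_nonneg (f := fun p : ℕ × ℕ => F (p.2, p.1))
      (fun p => hFnonneg _)).mp hF2).2
  -- final comparison
  refine Summable.of_nonneg_of_le
    (fun k => mul_nonneg (mul_nonneg (by positivity) (abs_nonneg _)) (hpmf _))
    (fun k => ?_)
    (((summable_pow_pmf (x := x) (a + 1)).mul_left (|g 0|)).add hcol)
  have hQ : 0 ≤ (k : ℝ) ^ (a + 1) * poiPMF x k := mul_nonneg (by positivity) (hpmf _)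
  have hcolsummable : Summable fun m : ℕ => F (m, k) := by
    refine summable_of_ne_finset_zero (s := Finset.range k) fun m hm => ?_
    simp only [hFdef, hWdef]
    rw [if_neg (by simpa using fun hlt => hm (Finset.mem_range.mpr hlt))]
    ring
  have hfin : ∑ m ∈ Finset.range k, F (m, k) = (∑ m ∈ Finset.range k, |fdiff g m|)
      * ((k : ℝ) ^ (a + 1) * poiPMF x k) := by
    rw [Finset.sum_mul]
    refine Finset.sum_congr rfl fun m hm => ?_
    simp only [hFdef, hWdef]
    rw [if_pos (Finset.mem_range.mp hm)]
  calc (k : ℝ) ^ (a + 1) * |g k| * poiPMF x k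
      = |g k| * ((k : ℝ) ^ (a + 1) * poiPMF x k) := by ring
    _ ≤ (|g 0| + ∑ m ∈ Finset.range k, |fdiff g m|) * ((k : ℝ) ^ (a + 1) * poiPMF x k) :=
        mul_le_mul_of_nonneg_right (abs_le_telescope g k) hQ
    _ = |g 0| * ((k : ℝ) ^ (a + 1) * poiPMF x k)
        + (∑ m ∈ Finset.range k, |fdiff g m|) * ((k : ℝ) ^ (a + 1) * poiPMF x k) := by ring
    _ ≤ |g 0| * ((k : ℝ) ^ (a + 1) * poiPMF x k) + ∑' m, F (m, k) := by
        refine add_le_add le_rfl ?_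
        rw [← hfin]
        exact Summable.sum_le_tsum (Finset.range k) (fun m _ => hFnonneg _) hcolsummable

/-- Chain: summability of `|Δⁿ g|` gives summability of `kⁿ |g k|`. -/
lemma chain {x : ℝ} (hx : 0 < x) : ∀ (n : ℕ) (g : ℕ → ℝ),
    Summable (fun k => |(fdiff^[n] g) k| * poiPMF x k) →
    Summable fun k : ℕ => (k : ℝ) ^ n * |g k| * poiPMF x k := by
  intro n
  induction n with
  | zero =>
    intro g H
    exact H.congr fun k => by simp
  | succ n ih =>
    intro g H
    have H' : Summable fun k => |(fdiff^[n] (fdiff g)) k| * poiPMF x k :=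
      H.congr fun k => by rw [Function.iterate_succ_apply]
    exact key_step hx g n (ih (fdiff g) H')

/-- For `X ~ Poisson(x)` with `x > 0` and `j ≥ 1`, the following are equivalent:
`E[|Δʲh(X)|] < ∞`, `E[|h(X + j)|] < ∞`, and `E[Xʲ |h(X)|] < ∞`. -/
theorem stmt7 (h : ℕ → ℝ) (x : ℝ) (hx : 0 < x) (j : ℕ) (hj : 1 ≤ j) :
    (Summable (fun k => |(fdiff^[j] h) k| * poiPMF x k) ↔
      Summable fun k => |h (k + j)| * poiPMF x k) ∧
    (Summable (fun k => |h (k + j)| * poiPMF x k) ↔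
      Summable fun (k : ℕ) => (k : ℝ) ^ j * |h k| * poiPMF x k) := by
  have h23 := iff23 hx h j hj
  constructor
  · constructor
    · intro hi
      exact h23.mpr (chain hx j h hi)
    · intro hii
      refine Summable.of_nonneg_of_le
        (fun k => mul_nonneg (abs_nonneg _) (poiPMF_nonneg hx.le _)) (fun k => ?_)
        (summable_sum (s := Finset.range (j + 1)) (fun i hi =>
          ((shift_summable hx h (Nat.lt_succ_iff.mp (Finset.mem_range.mp hi)) hii).mul_left
            ((Nat.choose j i : ℝ)))))
      calc |(fdiff^[j] h) k| * poiPMF x k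
          ≤ (∑ i ∈ Finset.range (j + 1), (Nat.choose j i : ℝ) * |h (k + i)|) * poiPMF x k :=
            mul_le_mul_of_nonneg_right (fdiff_iter_abs_le j h k) (poiPMF_nonneg hx.le _)
        _ = ∑ i ∈ Finset.range (j + 1), (Nat.choose j i : ℝ) * (|h (k + i)| * poiPMF x k) := by
            rw [Finset.sum_mul]
            exact Finset.sum_congr rfl fun i _ => by ring
  · exact h23
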